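/- (Theorem 5: open-loop solvability implies weak closed-loop solvability.) Suppose N ≥ 2 and Problem (LQ) is open-loop solvable (for every initial value x₀ there exists an open-loop optimal control). Then there exist matrices K*_t ∈ ℝ^{m×n} for t ∈ {0,…,N−2}, independent of the initial value, such that for every x₀ ∈ ℝⁿ there is an open-loop optimal control u* for x₀ whose state x* (x*₀ = x₀, x*_{t+1} = A_t x*_t + B_t u*_t) satisfies the linear feedback relation u*_t = K*_t x*_t for every t ∈ {0,…,N−2}. -/

import Mathlib

open Matrix Finset

noncomputable section

/-- State trajectory of the discrete-time linear system `x_{t+1} = A_t x_t + B_t u_t`. -/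
def lqState {n m : ℕ} (A : ℕ → Matrix (Fin n) (Fin n) ℝ) (B : ℕ → Matrix (Fin n) (Fin m) ℝ)
    (x₀ : Fin n → ℝ) (u : ℕ → Fin m → ℝ) : ℕ → Fin n → ℝ
  | 0 => x₀
  | t + 1 => A t *ᵥ lqState A B x₀ u t + B t *ᵥ u t

/-- Quadratic cost `J(x₀, u)`. -/
def lqCost {n m : ℕ} (N : ℕ) (A : ℕ → Matrix (Fin n) (Fin n) ℝ)
    (B : ℕ → Matrix (Fin n) (Fin m) ℝ) (Q : ℕ → Matrix (Fin n) (Fin n) ℝ)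
    (R : ℕ → Matrix (Fin m) (Fin m) ℝ) (S : ℕ → Matrix (Fin m) (Fin n) ℝ)
    (H : Matrix (Fin n) (Fin n) ℝ) (x₀ : Fin n → ℝ) (u : ℕ → Fin m → ℝ) : ℝ :=
  (∑ t ∈ range N,
      (lqState A B x₀ u t ⬝ᵥ Q t *ᵥ lqState A B x₀ u t
        + 2 * (u t ⬝ᵥ S t *ᵥ lqState A B x₀ u t)
        + u t ⬝ᵥ R t *ᵥ u t))
    + lqState A B x₀ u N ⬝ᵥ H *ᵥ lqState A B x₀ u N


variable {n m : ℕ} (N : ℕ) (A : ℕ → Matrix (Fin n) (Fin n) ℝ) (B : ℕ → Matrix (Fin n) (Fin m) ℝ)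
  (Q : ℕ → Matrix (Fin n) (Fin n) ℝ) (R : ℕ → Matrix (Fin m) (Fin m) ℝ)
  (S : ℕ → Matrix (Fin m) (Fin n) ℝ) (H : Matrix (Fin n) (Fin n) ℝ)

lemma lqState_add (x₀ y₀ : Fin n → ℝ) (u v : ℕ → Fin m → ℝ) (t : ℕ) :
    lqState A B (x₀ + y₀) (u + v) t = lqState A B x₀ u t + lqState A B y₀ v t := by
  induction t with
  | zero => rfl
  | succ t ih => simp [lqState, ih, mulVec_add]; abel

lemma lqState_smul (c : ℝ) (x₀ : Fin n → ℝ) (u : ℕ → Fin m → ℝ) (t : ℕ) :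
    lqState A B (c • x₀) (c • u) t = c • lqState A B x₀ u t := by
  induction t with
  | zero => rfl
  | succ t ih => simp [lqState, ih, mulVec_smul]

lemma lqState_zero (t : ℕ) : lqState A B (0 : Fin n → ℝ) (0 : ℕ → Fin m → ℝ) t = 0 := by
  induction t with
  | zero => rfl
  | succ t ih => simp [lqState, ih]

lemma lqState_congr (x₀ : Fin n → ℝ) (u w : ℕ → Fin m → ℝ) (t : ℕ)
    (h : ∀ s < t, u s = w s) : lqState A B x₀ u t = lqState A B x₀ w t := by
  induction t with
  | zero => rfl
  | succ t ih =>
      simp only [lqState]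
      rw [ih (fun s hs => h s (hs.trans (Nat.lt_succ_self t))), h t (Nat.lt_succ_self t)]

lemma dot_symm {k : ℕ} (M : Matrix (Fin k) (Fin k) ℝ) (hM : M.IsSymm) (a b : Fin k → ℝ) :
    a ⬝ᵥ M *ᵥ b = b ⬝ᵥ M *ᵥ a := by
  rw [Matrix.dotProduct_mulVec, ← dotProduct_comm, ← hM.eq, Matrix.vecMul_transpose, hM.eq]

/-- Symmetric bilinear form associated with the cost. -/
def lqB (x₀ : Fin n → ℝ) (u : ℕ → Fin m → ℝ) (y₀ : Fin n → ℝ) (v : ℕ → Fin m → ℝ) : ℝ :=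
  (∑ t ∈ range N,
      (lqState A B x₀ u t ⬝ᵥ Q t *ᵥ lqState A B y₀ v t
        + u t ⬝ᵥ S t *ᵥ lqState A B y₀ v t
        + v t ⬝ᵥ S t *ᵥ lqState A B x₀ u t
        + u t ⬝ᵥ R t *ᵥ v t))
    + lqState A B x₀ u N ⬝ᵥ H *ᵥ lqState A B y₀ v N

lemma lqCost_add_expand (hQ : ∀ t, (Q t).IsSymm) (hR : ∀ t, (R t).IsSymm) (hH : H.IsSymm)
    (x₀ y₀ : Fin n → ℝ) (u v : ℕ → Fin m → ℝ) :
    lqCost N A B Q R S H (x₀ + y₀) (u + v)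
      = lqCost N A B Q R S H x₀ u + lqCost N A B Q R S H y₀ v
        + 2 * lqB N A B Q R S H x₀ u y₀ v := by
  unfold lqCost lqB
  have hterm : ∀ t ∈ range N,
      (lqState A B (x₀ + y₀) (u + v) t ⬝ᵥ Q t *ᵥ lqState A B (x₀ + y₀) (u + v) t
        + 2 * ((u + v) t ⬝ᵥ S t *ᵥ lqState A B (x₀ + y₀) (u + v) t)
        + (u + v) t ⬝ᵥ R t *ᵥ (u + v) t)
      = (lqState A B x₀ u t ⬝ᵥ Q t *ᵥ lqState A B x₀ u t
          + 2 * (u t ⬝ᵥ S t *ᵥ lqState A B x₀ u t) + u t ⬝ᵥ R t *ᵥ u t)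
        + (lqState A B y₀ v t ⬝ᵥ Q t *ᵥ lqState A B y₀ v t
          + 2 * (v t ⬝ᵥ S t *ᵥ lqState A B y₀ v t) + v t ⬝ᵥ R t *ᵥ v t)
        + 2 * (lqState A B x₀ u t ⬝ᵥ Q t *ᵥ lqState A B y₀ v t
          + u t ⬝ᵥ S t *ᵥ lqState A B y₀ v t + v t ⬝ᵥ S t *ᵥ lqState A B x₀ u t
          + u t ⬝ᵥ R t *ᵥ v t) := by
    intro t _
    simp only [lqState_add, Pi.add_apply, Matrix.mulVec_add, add_dotProduct,
      dotProduct_add]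
    linear_combination dot_symm (Q t) (hQ t) (lqState A B y₀ v t) (lqState A B x₀ u t)
      + dot_symm (R t) (hR t) (v t) (u t)
  rw [Finset.sum_congr rfl hterm, Finset.sum_add_distrib, Finset.sum_add_distrib, mul_add,
    Finset.mul_sum]
  simp only [lqState_add, Matrix.mulVec_add, add_dotProduct, dotProduct_add]
  linear_combination dot_symm H hH (lqState A B y₀ v N) (lqState A B x₀ u N)

lemma lqB_add_left (x₀ x₀' y₀ : Fin n → ℝ) (u u' v : ℕ → Fin m → ℝ) :
    lqB N A B Q R S H (x₀ + x₀') (u + u') y₀ v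
      = lqB N A B Q R S H x₀ u y₀ v + lqB N A B Q R S H x₀' u' y₀ v := by
  unfold lqB
  have hterm : ∀ t ∈ range N,
      (lqState A B (x₀ + x₀') (u + u') t ⬝ᵥ Q t *ᵥ lqState A B y₀ v t
        + (u + u') t ⬝ᵥ S t *ᵥ lqState A B y₀ v t
        + v t ⬝ᵥ S t *ᵥ lqState A B (x₀ + x₀') (u + u') t
        + (u + u') t ⬝ᵥ R t *ᵥ v t)
      = (lqState A B x₀ u t ⬝ᵥ Q t *ᵥ lqState A B y₀ v t
          + u t ⬝ᵥ S t *ᵥ lqState A B y₀ v t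
          + v t ⬝ᵥ S t *ᵥ lqState A B x₀ u t
          + u t ⬝ᵥ R t *ᵥ v t)
        + (lqState A B x₀' u' t ⬝ᵥ Q t *ᵥ lqState A B y₀ v t
          + u' t ⬝ᵥ S t *ᵥ lqState A B y₀ v t
          + v t ⬝ᵥ S t *ᵥ lqState A B x₀' u' t
          + u' t ⬝ᵥ R t *ᵥ v t) := by
    intro t _
    simp only [lqState_add, Pi.add_apply, Matrix.mulVec_add, add_dotProduct,
      dotProduct_add]
    ring
  rw [Finset.sum_congr rfl hterm, Finset.sum_add_distrib]
  simp only [lqState_add, add_dotProduct]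
  ring

lemma lqB_smul_left (c : ℝ) (x₀ y₀ : Fin n → ℝ) (u v : ℕ → Fin m → ℝ) :
    lqB N A B Q R S H (c • x₀) (c • u) y₀ v = c * lqB N A B Q R S H x₀ u y₀ v := by
  unfold lqB
  have hterm : ∀ t ∈ range N,
      (lqState A B (c • x₀) (c • u) t ⬝ᵥ Q t *ᵥ lqState A B y₀ v t
        + (c • u) t ⬝ᵥ S t *ᵥ lqState A B y₀ v t
        + v t ⬝ᵥ S t *ᵥ lqState A B (c • x₀) (c • u) t
        + (c • u) t ⬝ᵥ R t *ᵥ v t)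
      = c * (lqState A B x₀ u t ⬝ᵥ Q t *ᵥ lqState A B y₀ v t
          + u t ⬝ᵥ S t *ᵥ lqState A B y₀ v t
          + v t ⬝ᵥ S t *ᵥ lqState A B x₀ u t
          + u t ⬝ᵥ R t *ᵥ v t) := by
    intro t _
    simp only [lqState_smul, Pi.smul_apply, smul_dotProduct, dotProduct_smul,
      Matrix.mulVec_smul, smul_eq_mul]
    ring
  rw [Finset.sum_congr rfl hterm, ← Finset.mul_sum]
  simp only [lqState_smul, smul_dotProduct, smul_eq_mul]
  ring

lemma lqB_zero_left (y₀ : Fin n → ℝ) (v : ℕ → Fin m → ℝ) :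
    lqB N A B Q R S H 0 0 y₀ v = 0 := by
  have := lqB_smul_left N A B Q R S H 0 0 y₀ 0 v
  simpa using this

lemma lqCost_smul (c : ℝ) (x₀ : Fin n → ℝ) (u : ℕ → Fin m → ℝ) :
    lqCost N A B Q R S H (c • x₀) (c • u) = c ^ 2 * lqCost N A B Q R S H x₀ u := by
  unfold lqCost
  have hterm : ∀ t ∈ range N,
      (lqState A B (c • x₀) (c • u) t ⬝ᵥ Q t *ᵥ lqState A B (c • x₀) (c • u) t
        + 2 * ((c • u) t ⬝ᵥ S t *ᵥ lqState A B (c • x₀) (c • u) t)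
        + (c • u) t ⬝ᵥ R t *ᵥ (c • u) t)
      = c ^ 2 * (lqState A B x₀ u t ⬝ᵥ Q t *ᵥ lqState A B x₀ u t
          + 2 * (u t ⬝ᵥ S t *ᵥ lqState A B x₀ u t)
          + u t ⬝ᵥ R t *ᵥ u t) := by
    intro t _
    simp only [lqState_smul, Pi.smul_apply, smul_dotProduct, dotProduct_smul,
      Matrix.mulVec_smul, smul_eq_mul]
    ring
  rw [Finset.sum_congr rfl hterm, ← Finset.mul_sum]
  simp only [lqState_smul, smul_dotProduct, dotProduct_smul, Matrix.mulVec_smul,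
    smul_eq_mul]
  ring

lemma lqCost_zero : lqCost N A B Q R S H 0 0 = 0 := by
  have := lqCost_smul N A B Q R S H 0 0 0
  simpa using this

lemma lqB_smul_right (c : ℝ) (x₀ y₀ : Fin n → ℝ) (u v : ℕ → Fin m → ℝ) :
    lqB N A B Q R S H x₀ u (c • y₀) (c • v) = c * lqB N A B Q R S H x₀ u y₀ v := by
  unfold lqB
  have hterm : ∀ t ∈ range N,
      (lqState A B x₀ u t ⬝ᵥ Q t *ᵥ lqState A B (c • y₀) (c • v) t
        + u t ⬝ᵥ S t *ᵥ lqState A B (c • y₀) (c • v) t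
        + (c • v) t ⬝ᵥ S t *ᵥ lqState A B x₀ u t
        + u t ⬝ᵥ R t *ᵥ (c • v) t)
      = c * (lqState A B x₀ u t ⬝ᵥ Q t *ᵥ lqState A B y₀ v t
          + u t ⬝ᵥ S t *ᵥ lqState A B y₀ v t
          + v t ⬝ᵥ S t *ᵥ lqState A B x₀ u t
          + u t ⬝ᵥ R t *ᵥ v t) := by
    intro t _
    simp only [lqState_smul, Pi.smul_apply, smul_dotProduct, dotProduct_smul,
      Matrix.mulVec_smul, smul_eq_mul]
    ring
  rw [Finset.sum_congr rfl hterm, ← Finset.mul_sum]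
  simp only [lqState_smul, dotProduct_smul, Matrix.mulVec_smul, smul_eq_mul]
  ring

lemma lqCost_congr (x₀ : Fin n → ℝ) (u w : ℕ → Fin m → ℝ) (h : ∀ t < N, u t = w t) :
    lqCost N A B Q R S H x₀ u = lqCost N A B Q R S H x₀ w := by
  unfold lqCost
  rw [lqState_congr A B x₀ u w N h]
  congr 1
  refine Finset.sum_congr rfl fun t ht => ?_
  have ht' : t < N := Finset.mem_range.mp ht
  rw [lqState_congr A B x₀ u w t (fun s hs => h s (hs.trans ht')), h t ht']

lemma lqCost_zero_nonneg
    (hsolv : ∀ x₀ : Fin n → ℝ, ∃ ubar : ℕ → Fin m → ℝ, ∀ u : ℕ → Fin m → ℝ,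
      lqCost N A B Q R S H x₀ ubar ≤ lqCost N A B Q R S H x₀ u)
    (v : ℕ → Fin m → ℝ) : 0 ≤ lqCost N A B Q R S H 0 v := by
  obtain ⟨ub, hub⟩ := hsolv 0
  by_contra hneg
  push_neg at hneg
  set a := lqCost N A B Q R S H 0 ub with ha
  set b := lqCost N A B Q R S H 0 v with hb
  set c : ℝ := Real.sqrt ((|a| + 1) / (-b)) with hc
  have hbpos : 0 < -b := by linarith
  have hc2 : c ^ 2 = (|a| + 1) / (-b) := by
    rw [hc, Real.sq_sqrt]
    positivity
  have hle : a ≤ lqCost N A B Q R S H 0 (c • v) := hub _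
  have hsm : lqCost N A B Q R S H 0 (c • v) = c ^ 2 * b := by
    have := lqCost_smul N A B Q R S H c 0 v
    simpa using this
  rw [hsm, hc2] at hle
  have : (|a| + 1) / (-b) * b = -(|a| + 1) := by
    rw [div_mul_eq_mul_div, div_eq_iff hbpos.ne']
    ring
  rw [this] at hle
  have := abs_nonneg a
  have := neg_abs_le a
  linarith

lemma opt_iff (hQ : ∀ t, (Q t).IsSymm) (hR : ∀ t, (R t).IsSymm) (hH : H.IsSymm)
    (hsolv : ∀ x₀ : Fin n → ℝ, ∃ ubar : ℕ → Fin m → ℝ, ∀ u : ℕ → Fin m → ℝ,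
      lqCost N A B Q R S H x₀ ubar ≤ lqCost N A B Q R S H x₀ u)
    (x₀ : Fin n → ℝ) (u : ℕ → Fin m → ℝ) :
    (∀ w, lqCost N A B Q R S H x₀ u ≤ lqCost N A B Q R S H x₀ w)
      ↔ ∀ v, lqB N A B Q R S H x₀ u 0 v = 0 := by
  constructor
  · intro hopt v
    set β := lqB N A B Q R S H x₀ u 0 v with hβ
    set g := lqCost N A B Q R S H 0 v with hg
    have hg0 : 0 ≤ g := lqCost_zero_nonneg N A B Q R S H hsolv v
    have key : ∀ c : ℝ, 0 ≤ c ^ 2 * g + 2 * (c * β) := by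
      intro c
      have hexp := lqCost_add_expand N A B Q R S H hQ hR hH x₀ (c • (0 : Fin n → ℝ)) u (c • v)
      rw [smul_zero] at hexp
      rw [add_zero] at hexp
      have h1 : lqCost N A B Q R S H 0 (c • v) = c ^ 2 * g := by
        have := lqCost_smul N A B Q R S H c 0 v
        simpa using this
      have h2 : lqB N A B Q R S H x₀ u 0 (c • v) = c * β := by
        have := lqB_smul_right N A B Q R S H c x₀ 0 u v
        simpa using this
      rw [h1, h2] at hexp
      have h3 := hopt (u + c • v)
      rw [hexp] at h3
      linarith
    have hd : (0:ℝ) < g + 1 := by linarith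
    have hk := key (-β / (g + 1))
    have heq : (-β / (g + 1)) ^ 2 * g + 2 * ((-β / (g + 1)) * β)
        = (β ^ 2 * g - 2 * β ^ 2 * (g + 1)) / (g + 1) ^ 2 := by
      field_simp
      ring
    rw [heq] at hk
    have hX : 0 ≤ β ^ 2 * g - 2 * β ^ 2 * (g + 1) := by
      by_contra hcon
      push_neg at hcon
      have : (β ^ 2 * g - 2 * β ^ 2 * (g + 1)) / (g + 1) ^ 2 < 0 :=
        div_neg_of_neg_of_pos hcon (by positivity)
      linarith
    have hsq : β ^ 2 = 0 := le_antisymm (by nlinarith) (sq_nonneg β)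
    exact pow_eq_zero_iff (by norm_num) |>.mp hsq
  · intro hB w
    have hexp := lqCost_add_expand N A B Q R S H hQ hR hH x₀ 0 u (w - u)
    rw [add_zero] at hexp
    have hw : u + (w - u) = w := by ring
    rw [hw] at hexp
    rw [hexp, hB]
    have := lqCost_zero_nonneg N A B Q R S H hsolv (w - u)
    linarith

lemma lqB_sum_left {ι : Type*} (s : Finset ι) (x : ι → Fin n → ℝ) (w : ι → ℕ → Fin m → ℝ)
    (y₀ : Fin n → ℝ) (v : ℕ → Fin m → ℝ) :
    lqB N A B Q R S H (∑ i ∈ s, x i) (∑ i ∈ s, w i) y₀ v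
      = ∑ i ∈ s, lqB N A B Q R S H (x i) (w i) y₀ v := by
  induction s using Finset.cons_induction with
  | empty => simpa using lqB_zero_left N A B Q R S H y₀ v
  | cons a s ha ih =>
      rw [Finset.sum_cons, Finset.sum_cons, Finset.sum_cons, lqB_add_left, ih]

/-- Factorization of linear maps through a common map when kernels are nested. -/
lemma exists_factor {K V W U : Type*} [Field K] [AddCommGroup V] [Module K V]
    [AddCommGroup W] [Module K W] [AddCommGroup U] [Module K U]
    (φ : V →ₗ[K] W) (ψ : V →ₗ[K] U) (h : ∀ x, φ x = 0 → ψ x = 0) :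
    ∃ κ : W →ₗ[K] U, ∀ x, ψ x = κ (φ x) := by
  obtain ⟨q, hq⟩ := Submodule.exists_isCompl (LinearMap.range φ)
  have hker : LinearMap.ker φ ≤ LinearMap.ker ψ := by
    intro x hx
    exact LinearMap.mem_ker.mpr (h x (LinearMap.mem_ker.mp hx))
  let π := (LinearMap.range φ).linearProjOfIsCompl q hq
  let eq := φ.quotKerEquivRange
  let lift := (LinearMap.ker φ).liftQ ψ hker
  refine ⟨lift ∘ₗ (eq.symm : _ →ₗ[K] _) ∘ₗ π, fun x => ?_⟩
  have hmem : φ x ∈ LinearMap.range φ := ⟨x, rfl⟩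
  have hπ : π (φ x) = ⟨φ x, hmem⟩ :=
    Submodule.linearProjOfIsCompl_apply_left hq ⟨φ x, hmem⟩
  have heq : eq (Submodule.Quotient.mk x) = ⟨φ x, hmem⟩ := by
    ext
    exact φ.quotKerEquivRange_apply_mk x
  have hsymm : eq.symm ⟨φ x, hmem⟩ = Submodule.Quotient.mk x := by
    rw [← heq, LinearEquiv.symm_apply_apply]
  simp only [LinearMap.comp_apply, hπ, LinearEquiv.coe_coe, hsymm]
  exact (Submodule.liftQ_apply _ _ _).symm


/-- Extend a finitely-indexed control to `ℕ`, zero beyond `N`. -/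
def toCtrlL : EuclideanSpace ℝ (Fin N × Fin m) →ₗ[ℝ] (ℕ → Fin m → ℝ) where
  toFun e := fun s j => if h : s < N then e (⟨s, h⟩, j) else 0
  map_add' e f := by
    funext s j
    by_cases h : s < N <;> simp [h]
  map_smul' c e := by
    funext s j
    by_cases h : s < N <;> simp [h]

lemma toCtrlL_lt (e : EuclideanSpace ℝ (Fin N × Fin m)) (s : ℕ) (h : s < N) (j : Fin m) :
    toCtrlL N e s j = e (⟨s, h⟩, j) := by
  simp [toCtrlL, h]

lemma sum_single_decomp (x : Fin n → ℝ) : ∑ i, x i • (Pi.single i 1 : Fin n → ℝ) = x := by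
  have : ∀ i : Fin n, x i • (Pi.single i 1 : Fin n → ℝ) = Pi.single i (x i) := by
    intro i; funext j; by_cases h : j = i <;> simp [Pi.single_apply, h]
  simp_rw [this]
  exact Finset.univ_sum_single x

lemma lqB_sub_left (x₀ x₀' y₀ : Fin n → ℝ) (u u' v : ℕ → Fin m → ℝ) :
    lqB N A B Q R S H (x₀ - x₀') (u - u') y₀ v
      = lqB N A B Q R S H x₀ u y₀ v - lqB N A B Q R S H x₀' u' y₀ v := by
  have h := lqB_add_left N A B Q R S H (x₀ - x₀') x₀' y₀ (u - u') u' v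
  rw [sub_add_cancel, sub_add_cancel] at h
  linarith

theorem stmt_15' (hn : 0 < n) (hm : 0 < m) (hN : 2 ≤ N)
    (hQ : ∀ t, (Q t).IsSymm) (hR : ∀ t, (R t).IsSymm) (hH : H.IsSymm)
    (hsolv : ∀ x₀ : Fin n → ℝ, ∃ ubar : ℕ → Fin m → ℝ, ∀ u : ℕ → Fin m → ℝ,
      lqCost N A B Q R S H x₀ ubar ≤ lqCost N A B Q R S H x₀ u) :
    ∃ Kstar : ℕ → Matrix (Fin m) (Fin n) ℝ,
      ∀ x₀ : Fin n → ℝ, ∃ ustar : ℕ → Fin m → ℝ,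
        (∀ u : ℕ → Fin m → ℝ,
          lqCost N A B Q R S H x₀ ustar ≤ lqCost N A B Q R S H x₀ u) ∧
        ∀ t < N - 1, ustar t = Kstar t *ᵥ lqState A B x₀ ustar t := by
  classical
  choose ub hub using fun i : Fin n => hsolv (Pi.single i 1)
  -- the subspace of optimal controls for zero initial state
  set Kk : Submodule ℝ (EuclideanSpace ℝ (Fin N × Fin m)) :=
    { carrier := {e | ∀ v, lqB N A B Q R S H 0 (toCtrlL N e) 0 v = 0}
      add_mem' := by
        intro a b ha hb v
        have h := lqB_add_left N A B Q R S H 0 0 0 (toCtrlL N a) (toCtrlL N b) v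
        rw [add_zero] at h
        show lqB N A B Q R S H 0 (toCtrlL N (a + b)) 0 v = 0
        rw [_root_.map_add, h, ha v, hb v, add_zero]
      zero_mem' := by
        intro v
        show lqB N A B Q R S H 0 (toCtrlL N 0) 0 v = 0
        rw [_root_.map_zero]
        exact lqB_zero_left N A B Q R S H 0 v
      smul_mem' := by
        intro c a ha v
        have h := lqB_smul_left N A B Q R S H c 0 0 (toCtrlL N a) v
        rw [smul_zero] at h
        show lqB N A B Q R S H 0 (toCtrlL N (c • a)) 0 v = 0
        rw [_root_.map_smul, h, ha v, mul_zero] } with hKk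
  have hmemKk : ∀ e : EuclideanSpace ℝ (Fin N × Fin m),
      e ∈ Kk ↔ ∀ v, lqB N A B Q R S H 0 (toCtrlL N e) 0 v = 0 := fun e => Iff.rfl
  -- optimal controls for the standard basis vectors, projected onto Kᗮ
  set g : Fin n → EuclideanSpace ℝ (Fin N × Fin m) := fun i => WithLp.toLp 2 (fun q : Fin N × Fin m => ub i q.1 q.2) with hg
  set p : Fin n → EuclideanSpace ℝ (Fin N × Fin m) :=
    fun i => g i - (Kk.orthogonalProjection (g i) : EuclideanSpace ℝ (Fin N × Fin m)) with hp
  have hporth : ∀ i, p i ∈ Kkᗮ := fun i => Kk.sub_starProjection_mem_orthogonal (g i)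
  have hgopt : ∀ i v, lqB N A B Q R S H (Pi.single i 1) (toCtrlL N (g i)) 0 v = 0 := by
    intro i
    apply (opt_iff N A B Q R S H hQ hR hH hsolv _ _).mp
    intro w
    have hc : lqCost N A B Q R S H (Pi.single i 1) (toCtrlL N (g i))
        = lqCost N A B Q R S H (Pi.single i 1) (ub i) := by
      apply lqCost_congr
      intro s hs
      funext j
      rw [toCtrlL_lt N (g i) s hs]
    rw [hc]
    exact hub i w
  -- transporting optimality along the coset of Kk
  have hcoset : ∀ (x₀ : Fin n → ℝ) (e f : EuclideanSpace ℝ (Fin N × Fin m)),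
      (∀ v, lqB N A B Q R S H x₀ (toCtrlL N e) 0 v = 0) → f - e ∈ Kk →
      ∀ v, lqB N A B Q R S H x₀ (toCtrlL N f) 0 v = 0 := by
    intro x₀ e f he hfe v
    have hf : f = e + (f - e) := by abel
    have h := lqB_add_left N A B Q R S H x₀ 0 0 (toCtrlL N e) (toCtrlL N (f - e)) v
    rw [add_zero] at h
    rw [hf, _root_.map_add, h, he v, (hmemKk _).mp hfe v, add_zero]
  have hpopt : ∀ i v, lqB N A B Q R S H (Pi.single i 1) (toCtrlL N (p i)) 0 v = 0 := by
    intro i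
    apply hcoset _ (g i) (p i) (hgopt i)
    have : p i - g i = -(Kk.orthogonalProjection (g i) : EuclideanSpace ℝ (Fin N × Fin m)) := by
      simp only [hp]; abel
    rw [this]
    exact neg_mem (SetLike.coe_mem _)
  -- the candidate optimal control, linear in x₀
  set sel : (Fin n → ℝ) → EuclideanSpace ℝ (Fin N × Fin m) :=
    fun x₀ => ∑ i, x₀ i • p i with hsel
  set uS : (Fin n → ℝ) → ℕ → Fin m → ℝ := fun x₀ => toCtrlL N (sel x₀) with huS
  have hselorth : ∀ x₀, sel x₀ ∈ Kkᗮ := by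
    intro x₀
    exact Submodule.sum_mem _ fun i _ => Submodule.smul_mem _ _ (hporth i)
  have hOptSel : ∀ x₀ v, lqB N A B Q R S H x₀ (uS x₀) 0 v = 0 := by
    intro x₀ v
    have hu : uS x₀ = ∑ i, x₀ i • toCtrlL N (p i) := by
      show toCtrlL N (∑ i, x₀ i • p i) = ∑ i, x₀ i • toCtrlL N (p i)
      rw [_root_.map_sum]
      simp only [_root_.map_smul]
    have hgoal : lqB N A B Q R S H (∑ i, x₀ i • (Pi.single i 1 : Fin n → ℝ))
        (∑ i, x₀ i • toCtrlL N (p i)) 0 v = 0 := by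
      rw [lqB_sum_left]
      refine Finset.sum_eq_zero fun i _ => ?_
      rw [lqB_smul_left, hpopt i v, mul_zero]
    rw [sum_single_decomp x₀] at hgoal
    rw [hu]
    exact hgoal
  have hOptuS : ∀ x₀ w, lqCost N A B Q R S H x₀ (uS x₀)
      ≤ lqCost N A B Q R S H x₀ w := by
    intro x₀
    exact (opt_iff N A B Q R S H hQ hR hH hsolv _ _).mpr (hOptSel x₀)
  -- the key step: if the optimal state vanishes at time t, so does the optimal control
  have KEY : ∀ t, t < N → ∀ x₀ : Fin n → ℝ,
      lqState A B x₀ (uS x₀) t = 0 → uS x₀ t = 0 := by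
    intro t ht x₀ hXt
    set e' : EuclideanSpace ℝ (Fin N × Fin m) :=
      WithLp.toLp 2 (fun q : Fin N × Fin m => if ((q.1 : ℕ) < t) then sel x₀ q else 0) with he'
    set u' := toCtrlL N e' with hu'def
    have hu'low : ∀ s, s < t → u' s = uS x₀ s := by
      intro s hs
      funext j
      have hsN : s < N := hs.trans ht
      rw [hu'def, toCtrlL_lt N e' s hsN]
      simp only [huS]
      rw [toCtrlL_lt N (sel x₀) s hsN]
      show (if ((s : ℕ) < t) then sel x₀ (⟨s, hsN⟩, j) else 0) = sel x₀ (⟨s, hsN⟩, j)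
      rw [if_pos hs]
    have hu'high : ∀ s, t ≤ s → u' s = 0 := by
      intro s hs
      funext j
      by_cases hsN : s < N
      · rw [hu'def, toCtrlL_lt N e' s hsN]
        show (if ((s : ℕ) < t) then sel x₀ (⟨s, hsN⟩, j) else 0) = 0
        rw [if_neg (by omega)]
      · rw [hu'def]
        show (if h : s < N then e' (⟨s, h⟩, j) else 0) = 0
        rw [dif_neg hsN]
    have hX'low : ∀ s, s ≤ t → lqState A B x₀ u' s = lqState A B x₀ (uS x₀) s :=
      fun s hs => lqState_congr A B x₀ u' (uS x₀) s
        (fun r hr => hu'low r (lt_of_lt_of_le hr hs))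
    have hX't : lqState A B x₀ u' t = 0 := by rw [hX'low t le_rfl]; exact hXt
    have hX'high : ∀ s, t ≤ s → lqState A B x₀ u' s = 0 := by
      intro s hs
      induction s, hs using Nat.le_induction with
      | base => exact hX't
      | succ s hs ih => simp [lqState, ih, hu'high s hs]
    set v : ℕ → Fin m → ℝ := fun s => if s < t then 0 else uS x₀ s with hv
    have hvlow : ∀ s, s < t → v s = 0 := fun s hs => by
      show (if s < t then 0 else uS x₀ s) = 0
      exact if_pos hs
    have hvhigh : ∀ s, t ≤ s → v s = uS x₀ s := fun s hs => by
      show (if s < t then 0 else uS x₀ s) = uS x₀ s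
      exact if_neg (by omega)
    have hYlow : ∀ s, s ≤ t → lqState A B 0 v s = 0 := by
      intro s hs
      induction s with
      | zero => rfl
      | succ s ih =>
          have hs' : s < t := hs
          simp [lqState, ih (Nat.le_of_succ_le hs), hvlow s hs']
    have hYhigh : ∀ s, t ≤ s → lqState A B 0 v s = lqState A B x₀ (uS x₀) s := by
      intro s hs
      induction s, hs using Nat.le_induction with
      | base => rw [hYlow t le_rfl, hXt]
      | succ s hs ih => simp [lqState, ih, hvhigh s hs]
    have hsplit : lqCost N A B Q R S H x₀ u' + lqCost N A B Q R S H 0 v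
        = lqCost N A B Q R S H x₀ (uS x₀) := by
      unfold lqCost
      have hre : ∀ a ta b tb : ℝ, a + ta + (b + tb) = a + b + (ta + tb) := by intros; ring
      rw [hre, ← Finset.sum_add_distrib]
      have hterm : ∀ s ∈ range N,
          ((lqState A B x₀ u' s ⬝ᵥ Q s *ᵥ lqState A B x₀ u' s
              + 2 * (u' s ⬝ᵥ S s *ᵥ lqState A B x₀ u' s) + u' s ⬝ᵥ R s *ᵥ u' s)
            + (lqState A B 0 v s ⬝ᵥ Q s *ᵥ lqState A B 0 v s
              + 2 * (v s ⬝ᵥ S s *ᵥ lqState A B 0 v s) + v s ⬝ᵥ R s *ᵥ v s))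
          = (lqState A B x₀ (uS x₀) s ⬝ᵥ Q s *ᵥ lqState A B x₀ (uS x₀) s
              + 2 * (uS x₀ s ⬝ᵥ S s *ᵥ lqState A B x₀ (uS x₀) s)
              + uS x₀ s ⬝ᵥ R s *ᵥ uS x₀ s) := by
        intro s _
        by_cases hst : s < t
        · rw [hX'low s hst.le, hu'low s hst, hYlow s hst.le, hvlow s hst]
          simp
        · have hst' : t ≤ s := by omega
          rw [hX'high s hst', hu'high s hst', hYhigh s hst', hvhigh s hst']
          simp
      rw [Finset.sum_congr rfl hterm]
      congr 1
      rw [hX'high N ht.le, hYhigh N ht.le]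
      simp
    have hv0 : 0 ≤ lqCost N A B Q R S H 0 v := lqCost_zero_nonneg N A B Q R S H hsolv v
    have hle2 := hOptuS x₀ u'
    have hJ' : lqCost N A B Q R S H x₀ u' = lqCost N A B Q R S H x₀ (uS x₀) := by
      linarith
    have hopt' : ∀ w, lqCost N A B Q R S H x₀ u' ≤ lqCost N A B Q R S H x₀ w := by
      intro w
      rw [hJ']
      exact hOptuS x₀ w
    have hBe' := (opt_iff N A B Q R S H hQ hR hH hsolv x₀ u').mp hopt'
    have hmemK : e' - sel x₀ ∈ Kk := by
      rw [hmemKk]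
      intro w
      rw [_root_.map_sub]
      have h := lqB_sub_left N A B Q R S H x₀ x₀ 0 u' (toCtrlL N (sel x₀)) w
      rw [sub_self] at h
      rw [← hu'def, h, hBe' w]
      have h2 := hOptSel x₀ w
      simp only [huS] at h2
      rw [h2, sub_zero]
    have hinner : (inner ℝ (e' - sel x₀) (sel x₀) : ℝ) = 0 :=
      (Submodule.mem_orthogonal Kk (sel x₀)).mp (hselorth x₀) _ hmemK
    have hinner' : (inner ℝ (sel x₀) (e' - sel x₀) : ℝ) = 0 := by
      rw [real_inner_comm]; exact hinner
    have hnorm1 : (inner ℝ (e') (e') : ℝ)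
        = (inner ℝ (sel x₀) (sel x₀) : ℝ) + (inner ℝ (e' - sel x₀) (e' - sel x₀) : ℝ) := by
      have hdecomp : e' = sel x₀ + (e' - sel x₀) := by abel
      conv_lhs => rw [hdecomp]
      rw [real_inner_add_add_self, hinner']
      ring
    have hnorm2 : (inner ℝ (e') (e') : ℝ) ≤ (inner ℝ (sel x₀) (sel x₀) : ℝ) := by
      simp only [PiLp.inner_apply, RCLike.inner_apply, conj_trivial]
      apply Finset.sum_le_sum
      intro q _
      by_cases hq : ((q.1 : ℕ) < t)
      · have : e' q = sel x₀ q := by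
          show (if ((q.1 : ℕ) < t) then sel x₀ q else 0) = sel x₀ q
          exact if_pos hq
        rw [this]
      · have : e' q = 0 := by
          show (if ((q.1 : ℕ) < t) then sel x₀ q else 0) = 0
          exact if_neg hq
        rw [this]
        simpa using mul_self_nonneg (sel x₀ q)
    have hk0 : e' - sel x₀ = 0 := by
      have hle : (inner ℝ (e' - sel x₀) (e' - sel x₀) : ℝ) ≤ 0 := by linarith
      have heq : (inner ℝ (e' - sel x₀) (e' - sel x₀) : ℝ) = 0 :=
        le_antisymm hle real_inner_self_nonneg
      exact inner_self_eq_zero.mp heq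
    have he'sel : e' = sel x₀ := by rwa [sub_eq_zero] at hk0
    funext j
    simp only [huS]
    rw [toCtrlL_lt N (sel x₀) t ht, ← he'sel]
    show (if ((t : ℕ) < t) then sel x₀ (⟨t, ht⟩, j) else 0) = 0
    rw [if_neg (lt_irrefl t)]
  -- the linear maps x₀ ↦ u*_t and x₀ ↦ x*_t
  have huSadd : ∀ x y : Fin n → ℝ, uS (x + y) = uS x + uS y := by
    intro x y
    simp only [huS, hsel]
    have : ∑ i, (x + y) i • p i = (∑ i, x i • p i) + ∑ i, y i • p i := by
      rw [← Finset.sum_add_distrib]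
      refine Finset.sum_congr rfl fun i _ => ?_
      rw [Pi.add_apply, add_smul]
    rw [this, _root_.map_add]
  have huSsmul : ∀ (c : ℝ) (x : Fin n → ℝ), uS (c • x) = c • uS x := by
    intro c x
    simp only [huS, hsel]
    have : ∑ i, (c • x) i • p i = c • ∑ i, x i • p i := by
      rw [Finset.smul_sum]
      refine Finset.sum_congr rfl fun i _ => ?_
      rw [Pi.smul_apply, smul_smul, smul_eq_mul]
    rw [this, _root_.map_smul]
  set ψ : ℕ → (Fin n → ℝ) →ₗ[ℝ] (Fin m → ℝ) := fun t =>
    { toFun := fun x₀ => uS x₀ t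
      map_add' := by
        intro x y
        show uS (x + y) t = uS x t + uS y t
        rw [huSadd]; rfl
      map_smul' := by
        intro c x
        show uS (c • x) t = c • uS x t
        rw [huSsmul]; rfl } with hψ
  set φ : ℕ → (Fin n → ℝ) →ₗ[ℝ] (Fin n → ℝ) := fun t =>
    { toFun := fun x₀ => lqState A B x₀ (uS x₀) t
      map_add' := by
        intro x y
        show lqState A B (x + y) (uS (x + y)) t = _
        rw [huSadd]; exact lqState_add A B x y (uS x) (uS y) t
      map_smul' := by
        intro c x
        show lqState A B (c • x) (uS (c • x)) t = _
        rw [huSsmul]; exact lqState_smul A B c x (uS x) t } with hφ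
  have hfact : ∀ t, ∃ κL : (Fin n → ℝ) →ₗ[ℝ] (Fin m → ℝ),
      t < N → ∀ x, ψ t x = κL (φ t x) := by
    intro t
    by_cases h : t < N
    · obtain ⟨κ, hκ⟩ := exists_factor (φ t) (ψ t) (fun x hx => KEY t h x hx)
      exact ⟨κ, fun _ => hκ⟩
    · exact ⟨0, fun h' => absurd h' h⟩
  choose κ hκ using hfact
  refine ⟨fun t => LinearMap.toMatrix' (κ t), fun x₀ => ⟨uS x₀, hOptuS x₀, ?_⟩⟩
  intro t htN1
  have htN : t < N := by omega
  have h := hκ t htN x₀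
  show uS x₀ t = LinearMap.toMatrix' (κ t) *ᵥ lqState A B x₀ (uS x₀) t
  rw [← Matrix.toLin'_apply, Matrix.toLin'_toMatrix']
  exact h

/-- Theorem 5: open-loop solvability implies weak closed-loop solvability:
there are gains `K*_t` (t ∈ {0,…,N−2}), independent of the initial value, such that every
initial value admits an open-loop optimal control in linear feedback form `u*_t = K*_t x*_t`
for all `t ∈ {0,…,N−2}`. -/
theorem stmt_15 {n m : ℕ} (hn : 0 < n) (hm : 0 < m) (N : ℕ) (hN : 2 ≤ N)
    (A : ℕ → Matrix (Fin n) (Fin n) ℝ) (B : ℕ → Matrix (Fin n) (Fin m) ℝ)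
    (Q : ℕ → Matrix (Fin n) (Fin n) ℝ) (R : ℕ → Matrix (Fin m) (Fin m) ℝ)
    (S : ℕ → Matrix (Fin m) (Fin n) ℝ) (H : Matrix (Fin n) (Fin n) ℝ)
    (hQ : ∀ t, (Q t).IsSymm) (hR : ∀ t, (R t).IsSymm) (hH : H.IsSymm)
    (hsolv : ∀ x₀ : Fin n → ℝ, ∃ ubar : ℕ → Fin m → ℝ, ∀ u : ℕ → Fin m → ℝ,
      lqCost N A B Q R S H x₀ ubar ≤ lqCost N A B Q R S H x₀ u) :
    ∃ Kstar : ℕ → Matrix (Fin m) (Fin n) ℝ,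
      ∀ x₀ : Fin n → ℝ, ∃ ustar : ℕ → Fin m → ℝ,
        (∀ u : ℕ → Fin m → ℝ,
          lqCost N A B Q R S H x₀ ustar ≤ lqCost N A B Q R S H x₀ u) ∧
        ∀ t < N - 1, ustar t = Kstar t *ᵥ lqState A B x₀ ustar t := by
  exact stmt_15' N A B Q R S H hn hm hN hQ hR hH hsolv
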